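/- Let 0 < τ < 1 be real and A a sequence of length n over an arbitrary type. Then for every position k ∈ {1, …, n} and every integer ℓ ≥ 0, the number of distinct values x for which there exists a maximal run [l, r] of Cov_τ(x) with l ≤ k ≤ r whose length L = r−l+1 satisfies ⌈2^ℓ/τ⌉ ≤ L ≤ ⌈2^{ℓ+1}/τ⌉ − 1 is less than 8/τ. -/

import Mathlib

open scoped Classical

/-- Number of occurrences of `x` in `A[i,j]` (positions `i..j`, 1-based). -/
noncomputable def majCount {α : Type*} (A : ℕ → α) (i j : ℕ) (x : α) : ℕ :=
  ((Finset.Icc i j).filter (fun k => A k = x)).card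

/-- `x` is a `τ`-majority in the range `A[i,j]`. -/
def IsMaj {α : Type*} (τ : ℝ) (A : ℕ → α) (i j : ℕ) (x : α) : Prop :=
  τ * ((j : ℝ) - (i : ℝ) + 1) < (majCount A i j x : ℝ)

/-- `Cov τ A n x`: the set of positions `k ∈ {1,…,n}` lying in at least one interval
`[i,j] ⊆ {1,…,n}` in which `x` is a `τ`-majority. -/
def Cov {α : Type*} (τ : ℝ) (A : ℕ → α) (n : ℕ) (x : α) : Set ℕ :=
  {k | ∃ i j : ℕ, 1 ≤ i ∧ i ≤ j ∧ j ≤ n ∧ i ≤ k ∧ k ≤ j ∧ IsMaj τ A i j x}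

/-- `[l,r]` is a maximal run of `Cov τ A n x`. -/
def IsMaxRun {α : Type*} (τ : ℝ) (A : ℕ → α) (n : ℕ) (x : α) (l r : ℕ) : Prop :=
  l ≤ r ∧ (∀ k : ℕ, l ≤ k → k ≤ r → k ∈ Cov τ A n x) ∧
    (l = 1 ∨ (l - 1) ∉ Cov τ A n x) ∧ (r = n ∨ (r + 1) ∉ Cov τ A n x)

/- ### Auxiliary lemmas -/

lemma majCount_split {α : Type*} (A : ℕ → α) (x : α) {i m j : ℕ}
    (h1 : i ≤ m + 1) (h2 : m ≤ j) :
    majCount A i j x = majCount A i m x + majCount A (m+1) j x := by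
  classical
  unfold majCount
  rw [← Finset.card_union_of_disjoint (by
    rw [Finset.disjoint_left]
    intro p hp hq
    simp only [Finset.mem_filter, Finset.mem_Icc] at hp hq
    omega)]
  congr 1
  rw [← Finset.filter_union]
  congr 1
  ext p
  simp only [Finset.mem_Icc, Finset.mem_union]
  omega

lemma majCount_mono {α : Type*} (A : ℕ → α) (x : α) {i j i' j' : ℕ}
    (h1 : i' ≤ i) (h2 : j ≤ j') : majCount A i j x ≤ majCount A i' j' x :=
  Finset.card_le_card (Finset.filter_subset_filter _ (Finset.Icc_subset_Icc h1 h2))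

/-- Choose a witness interval at point `q` with maximal right endpoint. -/
lemma choose_max {α : Type*} (τ : ℝ) (A : ℕ → α) (x : α) (l r q : ℕ)
    (H : ∀ p, l ≤ p → p ≤ r → ∃ i j, l ≤ i ∧ i ≤ p ∧ p ≤ j ∧ j ≤ r ∧
      τ * ((j:ℝ) - i + 1) < (majCount A i j x : ℝ))
    (hq1 : l ≤ q) (hq2 : q ≤ r) :
    ∃ i j, l ≤ i ∧ i ≤ q ∧ q ≤ j ∧ j ≤ r ∧
      τ * ((j:ℝ) - i + 1) < (majCount A i j x : ℝ) ∧
      ∀ i' j', l ≤ i' → i' ≤ q → q ≤ j' → j' ≤ r →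
        τ * ((j':ℝ) - i' + 1) < (majCount A i' j' x : ℝ) → j' ≤ j := by
  classical
  set J := (Finset.Icc q r).filter (fun j : ℕ => ∃ i, l ≤ i ∧ i ≤ q ∧
    τ * ((j:ℝ) - i + 1) < (majCount A i j x : ℝ)) with hJ
  obtain ⟨i0, j0, h1, h2, h3, h4, h5⟩ := H q hq1 hq2
  have hne : J.Nonempty := ⟨j0, by
    simp only [hJ, Finset.mem_filter, Finset.mem_Icc]
    exact ⟨⟨h3, h4⟩, i0, h1, h2, h5⟩⟩
  have hmem := J.max'_mem hne
  simp only [hJ, Finset.mem_filter, Finset.mem_Icc] at hmem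
  obtain ⟨⟨hq, hr⟩, i1, hi1, hi2, hi3⟩ := hmem
  refine ⟨i1, J.max' hne, hi1, hi2, hq, hr, hi3, fun i' j' a b c d e => ?_⟩
  exact J.le_max' j' (by
    simp only [hJ, Finset.mem_filter, Finset.mem_Icc]
    exact ⟨⟨c, d⟩, i', a, b, e⟩)

/-- Key chain induction: multiplicity-2 covering accounting. -/
lemma coverK {α : Type*} (τ : ℝ) (hτ0 : 0 < τ) (A : ℕ → α) (x : α) (l r : ℕ)
    (H : ∀ p, l ≤ p → p ≤ r → ∃ i j, l ≤ i ∧ i ≤ p ∧ p ≤ j ∧ j ≤ r ∧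
      τ * ((j:ℝ) - i + 1) < (majCount A i j x : ℝ)) :
    ∀ d p i' j', r - j' = d → l ≤ i' → i' ≤ p + 1 → p + 1 ≤ j' → j' ≤ r →
      τ * ((j':ℝ) - i' + 1) < (majCount A i' j' x : ℝ) →
      (∀ i j, l ≤ i → i ≤ p + 1 → p + 1 ≤ j → j ≤ r →
        τ * ((j:ℝ) - i + 1) < (majCount A i j x : ℝ) → j ≤ j') →
      τ * ((r:ℝ) - p) < (majCount A i' p x : ℝ) + 2 * (majCount A (p+1) r x : ℝ) := by
  intro d
  induction d using Nat.strong_induction_on with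
  | _ d IH =>
    intro p i' j' hd hli hi'p hpj' hj'r hwit hmax
    by_cases hjr : j' = r
    · subst hjr
      have hsplit : majCount A i' j' x = majCount A i' p x + majCount A (p+1) j' x :=
        majCount_split A x hi'p (by omega)
      have hc : (majCount A i' j' x : ℝ)
          = (majCount A i' p x : ℝ) + (majCount A (p+1) j' x : ℝ) := by
        exact_mod_cast hsplit
      have hip : (i' : ℝ) ≤ (p : ℝ) + 1 := by exact_mod_cast hi'p
      have h1 : τ * ((j':ℝ) - p) ≤ τ * ((j':ℝ) - i' + 1) :=
        mul_le_mul_of_nonneg_left (by linarith) hτ0.le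
      have h2 : (0:ℝ) ≤ (majCount A (p+1) j' x : ℝ) := Nat.cast_nonneg _
      linarith
    · have hj'r' : j' < r := lt_of_le_of_ne hj'r hjr
      obtain ⟨i₂, j₂, hi₂l, hi₂, hj₂1, hj₂r, hwit₂, hmax₂⟩ :=
        choose_max τ A x l r (j'+1) H (by omega) (by omega)
      have hj₂ : j' < j₂ := by omega
      have hi₂p : p + 2 ≤ i₂ := by
        by_contra hcon
        have := hmax i₂ j₂ hi₂l (by omega) (by omega) hj₂r hwit₂
        omega
      have hIH := IH (r - j₂) (by omega) j' i₂ j₂ rfl hi₂l hi₂ (by omega) hj₂r hwit₂ hmax₂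
      have hB : majCount A (p+1) r x = majCount A (p+1) j' x + majCount A (j'+1) r x :=
        majCount_split A x (by omega) (by omega)
      have hC : majCount A i' j' x = majCount A i' p x + majCount A (p+1) j' x :=
        majCount_split A x hi'p (by omega)
      have hA : majCount A i₂ j' x ≤ majCount A (p+1) j' x :=
        majCount_mono A x (by omega) le_rfl
      have hip : (i' : ℝ) ≤ (p:ℝ) + 1 := by exact_mod_cast hi'p
      have hD : τ * ((j':ℝ) - p) ≤ τ * ((j':ℝ) - i' + 1) :=
        mul_le_mul_of_nonneg_left (by linarith) hτ0.le
      have hBc : (majCount A (p+1) r x : ℝ)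
          = (majCount A (p+1) j' x : ℝ) + (majCount A (j'+1) r x : ℝ) := by exact_mod_cast hB
      have hCc : (majCount A i' j' x : ℝ)
          = (majCount A i' p x : ℝ) + (majCount A (p+1) j' x : ℝ) := by exact_mod_cast hC
      have hAc : (majCount A i₂ j' x : ℝ) ≤ (majCount A (p+1) j' x : ℝ) := by exact_mod_cast hA
      have hkey : τ * ((r:ℝ) - p) = τ * ((j':ℝ) - p) + τ * ((r:ℝ) - j') := by ring
      linarith

/-- Covering lemma: the run `[l,r]` contains more than `τ(r-l+1)/2` occurrences of `x`. -/
lemma cover {α : Type*} (τ : ℝ) (hτ0 : 0 < τ) (A : ℕ → α) (x : α) (l r : ℕ)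
    (hl : 1 ≤ l) (hlr : l ≤ r)
    (H : ∀ p, l ≤ p → p ≤ r → ∃ i j, l ≤ i ∧ i ≤ p ∧ p ≤ j ∧ j ≤ r ∧
      τ * ((j:ℝ) - i + 1) < (majCount A i j x : ℝ)) :
    τ * ((r:ℝ) - l + 1) < 2 * (majCount A l r x : ℝ) := by
  obtain ⟨i₁, j₁, h1, h2, h3, h4, h5, h6⟩ := choose_max τ A x l r l H le_rfl hlr
  have hK := coverK τ hτ0 A x l r H (r - j₁) (l-1) i₁ j₁ rfl h1 (by omega) (by omega) h4 h5
    (fun i j a b c d e => h6 i j a (by omega) (by omega) d e)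
  have hz : majCount A i₁ (l-1) x = 0 := by
    unfold majCount
    rw [Finset.Icc_eq_empty (by omega)]
    simp
  rw [hz] at hK
  have hll : l - 1 + 1 = l := by omega
  rw [hll] at hK
  have hc : ((l-1:ℕ):ℝ) = (l:ℝ) - 1 := by
    have := Nat.cast_sub hl (R := ℝ)
    simpa using this
  rw [hc] at hK
  push_cast at hK
  linarith

set_option maxHeartbeats 1000000 in
/-- At most `8/τ` distinct values `x` have a maximal run of `Cov_τ(x)` covering a given
position `k` whose length lies between `⌈2^ℓ/τ⌉` and `⌈2^(ℓ+1)/τ⌉ - 1`. -/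
theorem stmt8 {α : Type*} (τ : ℝ) (hτ0 : 0 < τ) (hτ1 : τ < 1)
    (A : ℕ → α) (n : ℕ) (k : ℕ) (hk1 : 1 ≤ k) (hkn : k ≤ n) (ℓ : ℕ) :
    ({x : α | ∃ l r : ℕ, IsMaxRun τ A n x l r ∧ l ≤ k ∧ k ≤ r ∧
        ⌈((2 : ℝ) ^ ℓ) / τ⌉₊ ≤ r - l + 1 ∧
        r - l + 1 ≤ ⌈((2 : ℝ) ^ (ℓ + 1)) / τ⌉₊ - 1}.ncard : ℝ) < 8 / τ := by
  classical
  set S : Set α := {x : α | ∃ l r : ℕ, IsMaxRun τ A n x l r ∧ l ≤ k ∧ k ≤ r ∧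
        ⌈((2 : ℝ) ^ ℓ) / τ⌉₊ ≤ r - l + 1 ∧
        r - l + 1 ≤ ⌈((2 : ℝ) ^ (ℓ + 1)) / τ⌉₊ - 1} with hSdef
  set Lmin : ℕ := ⌈((2 : ℝ) ^ ℓ) / τ⌉₊ with hLmin
  set Lmax : ℕ := ⌈((2 : ℝ) ^ (ℓ + 1)) / τ⌉₊ - 1 with hLmaxdef
  have hpow1 : (1:ℝ) < (2:ℝ) ^ (ℓ + 1) / τ := by
    rw [lt_div_iff₀ hτ0]
    have : (2:ℝ) ≤ (2:ℝ) ^ (ℓ + 1) := by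
      calc (2:ℝ) = 2^1 := (pow_one 2).symm
      _ ≤ 2^(ℓ+1) := pow_le_pow_right₀ (by norm_num) (by omega)
    linarith
  have hceil2 : 1 < ⌈((2 : ℝ) ^ (ℓ + 1)) / τ⌉₊ := by
    rw [Nat.lt_ceil]
    exact_mod_cast hpow1
  have hLmax1 : 1 ≤ Lmax := by omega
  have hLmaxR : (Lmax:ℝ) < (2:ℝ) ^ (ℓ + 1) / τ := by
    have h1 : ((Lmax:ℕ):ℝ) = (⌈((2 : ℝ) ^ (ℓ + 1)) / τ⌉₊ : ℝ) - 1 := by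
      rw [hLmaxdef]
      have := Nat.cast_sub (R := ℝ) (le_of_lt hceil2)
      simpa using this
    have h2 : (⌈((2 : ℝ) ^ (ℓ + 1)) / τ⌉₊ : ℝ) < (2:ℝ) ^ (ℓ + 1) / τ + 1 :=
      Nat.ceil_lt_add_one (by positivity)
    linarith
  set W : Finset ℕ := Finset.Icc (k - (Lmax - 1)) (k + (Lmax - 1)) with hW
  have hWcard : W.card ≤ 2 * Lmax - 1 := by
    rw [hW, Nat.card_Icc]
    omega
  -- pointwise facts
  have hpt : ∀ x ∈ S, (2:ℝ)^ℓ < 2 * ((W.filter (fun p => A p = x)).card : ℝ) ∧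
      ∃ p ∈ W, A p = x := by
    intro x hx
    obtain ⟨l, r, hrun, hlk, hkr, hLlo, hLhi⟩ := hx
    obtain ⟨hlr, hcov, hmaxl, hmaxr⟩ := hrun
    obtain ⟨i0, j0, hi01, hi0j, hj0n, hi0l, hlj0, hmaj0⟩ := hcov l le_rfl hlr
    have hl1 : 1 ≤ l := le_trans hi01 hi0l
    have H : ∀ p, l ≤ p → p ≤ r → ∃ i j, l ≤ i ∧ i ≤ p ∧ p ≤ j ∧ j ≤ r ∧
        τ * ((j:ℝ) - i + 1) < (majCount A i j x : ℝ) := by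
      intro p hp1 hp2
      obtain ⟨i, j, hi1, hij, hjn, hip, hpj, hmaj⟩ := hcov p hp1 hp2
      refine ⟨i, j, ?_, hip, hpj, ?_, hmaj⟩
      · by_contra hcon
        push_neg at hcon
        rcases hmaxl with h1 | h1
        · omega
        · exact h1 ⟨i, j, hi1, hij, hjn, by omega, by omega, hmaj⟩
      · by_contra hcon
        push_neg at hcon
        rcases hmaxr with h1 | h1
        · omega
        · exact h1 ⟨i, j, hi1, hij, hjn, by omega, by omega, hmaj⟩
    have hcover := cover τ hτ0 A x l r hl1 hlr H
    have hsub : Finset.Icc l r ⊆ W := by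
      rw [hW]
      apply Finset.Icc_subset_Icc <;> omega
    have hmc : majCount A l r x ≤ (W.filter (fun p => A p = x)).card :=
      Finset.card_le_card (Finset.filter_subset_filter _ hsub)
    have hLminR : ((2:ℝ)^ℓ)/τ ≤ (Lmin:ℝ) := Nat.le_ceil _
    have hrl : (Lmin:ℝ) ≤ (r:ℝ) - l + 1 := by
      have h' : Lmin + l ≤ r + 1 := by omega
      have h'' : (Lmin:ℝ) + l ≤ (r:ℝ) + 1 := by exact_mod_cast h'
      linarith
    have h2l : (2:ℝ)^ℓ ≤ τ * ((r:ℝ) - l + 1) := by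
      have e1 : τ * (((2:ℝ)^ℓ)/τ) = (2:ℝ)^ℓ := by field_simp
      nlinarith [mul_le_mul_of_nonneg_left hrl hτ0.le,
        mul_le_mul_of_nonneg_left hLminR hτ0.le]
    have hmain : (2:ℝ)^ℓ < 2 * ((W.filter (fun p => A p = x)).card : ℝ) := by
      have hmcR : (majCount A l r x : ℝ) ≤ ((W.filter (fun p => A p = x)).card : ℝ) := by
        exact_mod_cast hmc
      linarith
    refine ⟨hmain, ?_⟩
    have hpos : 0 < (W.filter (fun p => A p = x)).card := by
      by_contra hcon
      push_neg at hcon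
      have hz : (W.filter (fun p => A p = x)).card = 0 := by omega
      rw [hz] at hmain
      norm_num at hmain
      nlinarith [pow_pos (show (0:ℝ) < 2 by norm_num) ℓ]
    obtain ⟨p, hp⟩ := Finset.card_pos.mp hpos
    simp only [Finset.mem_filter] at hp
    exact ⟨p, hp.1, hp.2⟩
  set T : Finset α := (W.image A).filter (fun x => x ∈ S) with hT
  have hST : S = ↑T := by
    ext x
    constructor
    · intro hx
      obtain ⟨_, p, hp, hpx⟩ := hpt x hx
      exact Finset.mem_coe.mpr (Finset.mem_filter.mpr
        ⟨Finset.mem_image.mpr ⟨p, hp, hpx⟩, hx⟩)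
    · intro hx
      exact (Finset.mem_filter.mp (Finset.mem_coe.mp hx)).2
  have hcard : S.ncard = T.card := by rw [hST, Set.ncard_coe_finset]
  rw [hcard]
  rcases Finset.eq_empty_or_nonempty T with hTe | hTne
  · rw [hTe]
    simp
    positivity
  -- disjoint union bound
  have hsum : ∑ x ∈ T, (W.filter (fun p => A p = x)).card ≤ W.card := by
    rw [← Finset.card_biUnion (by
      intro x hx y hy hxy
      rw [Function.onFun, Finset.disjoint_left]
      intro p hp hq
      simp only [Finset.mem_filter] at hp hq
      exact hxy (hp.2 ▸ hq.2 ▸ rfl))]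
    apply Finset.card_le_card
    intro p hp
    simp only [Finset.mem_biUnion, Finset.mem_filter] at hp
    obtain ⟨x, _, hp, _⟩ := hp
    exact hp
  have hsumR : (T.card : ℝ) * (2:ℝ)^ℓ < 2 * (W.card : ℝ) := by
    have h1 : ∑ _x ∈ T, (2:ℝ)^ℓ < ∑ x ∈ T, 2 * ((W.filter (fun p => A p = x)).card : ℝ) :=
      Finset.sum_lt_sum_of_nonempty hTne
        (fun x hx => (hpt x (Finset.mem_filter.mp hx).2).1)
    rw [Finset.sum_const, nsmul_eq_mul] at h1
    have h2 : ∑ x ∈ T, 2 * ((W.filter (fun p => A p = x)).card : ℝ)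
        = 2 * ((∑ x ∈ T, (W.filter (fun p => A p = x)).card : ℕ) : ℝ) := by
      rw [← Finset.mul_sum]
      push_cast
      ring
    rw [h2] at h1
    have h3 : ((∑ x ∈ T, (W.filter (fun p => A p = x)).card : ℕ) : ℝ) ≤ (W.card : ℝ) := by
      exact_mod_cast hsum
    linarith
  have hWcardR : (W.card : ℝ) ≤ 2 * (Lmax:ℝ) - 1 := by
    have h1 : W.card + 1 ≤ 2 * Lmax := by omega
    have h2 : (W.card : ℝ) + 1 ≤ 2 * (Lmax:ℝ) := by exact_mod_cast h1
    linarith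
  -- conclude
  have h2ℓ : (0:ℝ) < (2:ℝ)^ℓ := by positivity
  have h1 : (T.card : ℝ) * (2:ℝ)^ℓ < 4 * ((2:ℝ) ^ (ℓ + 1) / τ) := by
    linarith
  have hfinal : (T.card : ℝ) * (2:ℝ)^ℓ * τ < 8 * (2:ℝ)^ℓ := by
    have h2 : (2:ℝ) ^ (ℓ + 1) / τ * τ = (2:ℝ) ^ (ℓ + 1) := div_mul_cancel₀ _ hτ0.ne'
    have h3 := mul_lt_mul_of_pos_right h1 hτ0
    have h4 : (2:ℝ) ^ (ℓ + 1) = 2 * (2:ℝ) ^ ℓ := by rw [pow_succ]; ring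
    have h5 : 4 * ((2:ℝ) ^ (ℓ + 1) / τ) * τ = 8 * (2:ℝ)^ℓ := by
      rw [mul_assoc, h2, h4]; ring
    linarith
  rw [lt_div_iff₀ hτ0]
  by_contra hcon
  push_neg at hcon
  have h5 := mul_le_mul_of_nonneg_right hcon h2ℓ.le
  have h6 : (T.card:ℝ) * τ * (2:ℝ)^ℓ = (T.card:ℝ) * (2:ℝ)^ℓ * τ := by ring
  linarith
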